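/- For every natural number n ≥ 1 there exists a simple graph G_n with exactly n vertices such that G_n is triangle-free and its independence number satisfies α(G_n) ≤ 48·2^{1/3}·n^{2/3}. -/

import Mathlib

/-- The independence number of a graph: the largest size of an independent set of vertices. -/
noncomputable def indepNum {V : Type*} (G : SimpleGraph V) : ℕ :=
  sSup {n | ∃ s : Finset V, s.card = n ∧ ∀ x ∈ s, ∀ y ∈ s, ¬ G.Adj x y}

namespace RamseyAux

variable (p : ℕ) [Fact p.Prime]

abbrev K := ZMod p

/-- Vertex type: `(x, a, b)` encodes the point `(x, a*x+b)` on the line `y = a*x + b`. -/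
abbrev V := K p × K p × K p

def pt (v : V p) : K p × K p := (v.1, v.2.1 * v.1 + v.2.2)

def ln (v : V p) : K p × K p := v.2

def key (P : K p × K p) : ℕ := (P.1).val * p + (P.2).val

def onL (P L : K p × K p) : Prop := P.2 = L.1 * P.1 + L.2

lemma nat_key_aux {a b c d q : ℕ} (hb : b < q) (hd : d < q) (h : a * q + b = c * q + d) :
    a = c ∧ b = d := by
  have h1 : (a * q + b) % q = (c * q + d) % q := by rw [h]
  rw [mul_comm a q, mul_comm c q, Nat.mul_add_mod, Nat.mul_add_mod,
    Nat.mod_eq_of_lt hb, Nat.mod_eq_of_lt hd] at h1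
  subst h1
  refine ⟨?_, rfl⟩
  have hq : q ≠ 0 := by omega
  have : a * q = c * q := by omega
  exact Nat.eq_of_mul_eq_mul_right (Nat.pos_of_ne_zero hq) this

lemma key_inj {P Q : K p × K p} (h : key p P = key p Q) : P = Q := by
  have hb := ZMod.val_lt (n := p) P.2
  have hd := ZMod.val_lt (n := p) Q.2
  obtain ⟨h1, h2⟩ := nat_key_aux hb hd h
  haveI : NeZero p := ⟨(Fact.out : p.Prime).ne_zero⟩
  exact Prod.ext (ZMod.val_injective p h1) (ZMod.val_injective p h2)

lemma pt_on (v : V p) : onL p (pt p v) (ln p v) := rfl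

lemma ext_ptln {v w : V p} (h1 : pt p v = pt p w) (h2 : ln p v = ln p w) : v = w := by
  have hx : v.1 = w.1 := congrArg (Prod.fst : K p × K p → K p) h1
  exact Prod.ext hx h2

/-- Two distinct points lie on at most one common line. -/
lemma line_unique {P Q L M : K p × K p} (hPL : onL p P L) (hPM : onL p P M)
    (hQL : onL p Q L) (hQM : onL p Q M) (hPQ : P ≠ Q) : L = M := by
  by_cases h1 : L.1 = M.1
  · refine Prod.ext h1 ?_
    have : L.1 * P.1 + L.2 = M.1 * P.1 + M.2 := by rw [← hPL, ← hPM]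
    rw [h1] at this
    exact by linear_combination this
  · exfalso
    apply hPQ
    have hP : (L.1 - M.1) * P.1 = M.2 - L.2 := by
      have := hPL; have := hPM
      unfold onL at hPL hPM
      linear_combination hPM - hPL
    have hQ : (L.1 - M.1) * Q.1 = M.2 - L.2 := by
      unfold onL at hQL hQM
      linear_combination hQM - hQL
    have hne : L.1 - M.1 ≠ 0 := sub_ne_zero.mpr h1
    have hx : P.1 = Q.1 := by
      have := hP.trans hQ.symm
      exact mul_left_cancel₀ hne this
    have hy : P.2 = Q.2 := by
      unfold onL at hPL hQL
      rw [hPL, hQL, hx]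
    exact Prod.ext hx hy

def rel (v w : V p) : Prop :=
  key p (pt p v) < key p (pt p w) ∧ ln p v ≠ ln p w ∧ onL p (pt p v) (ln p w)

def G : SimpleGraph (V p) where
  Adj v w := rel p v w ∨ rel p w v
  symm := by constructor; intro v w h; tauto
  loopless := by
    constructor; intro v h
    rcases h with h | h <;> exact absurd h.1 (lt_irrefl _)

lemma adj_key_ne {v w : V p} (h : (G p).Adj v w) : key p (pt p v) ≠ key p (pt p w) := by
  rcases h with h | h
  · exact ne_of_lt h.1
  · exact (ne_of_lt h.1).symm

lemma no_tri {a b c : V p} (hab : (G p).Adj a b) (hbc : (G p).Adj b c) (hac : (G p).Adj a c)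
    (h1 : key p (pt p a) < key p (pt p b)) (h2 : key p (pt p b) < key p (pt p c)) : False := by
  have rab : rel p a b := by
    rcases hab with h | h
    · exact h
    · exact absurd h.1 (by omega)
  have rbc : rel p b c := by
    rcases hbc with h | h
    · exact h
    · exact absurd h.1 (by omega)
  have rac : rel p a c := by
    rcases hac with h | h
    · exact h
    · exact absurd h.1 (by omega)
  have hPQ : pt p a ≠ pt p b := fun h => by rw [h] at h1; omega
  have := line_unique p rab.2.2 rac.2.2 (pt_on p b) rbc.2.2 hPQ
  exact rbc.2.1 this

lemma triangle_free : (G p).CliqueFree 3 := by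
  intro s hs
  obtain ⟨a, b, c, hab, hac, hbc, rfl⟩ := Finset.card_eq_three.mp hs.card_eq
  have h1 : (G p).Adj a b := hs.isClique (by simp) (by simp) hab
  have h2 : (G p).Adj a c := hs.isClique (by simp) (by simp) hac
  have h3 : (G p).Adj b c := hs.isClique (by simp) (by simp) hbc
  have k1 := adj_key_ne p h1
  have k2 := adj_key_ne p h2
  have k3 := adj_key_ne p h3
  rcases lt_trichotomy (key p (pt p a)) (key p (pt p b)) with hx | hx | hx
  · rcases lt_trichotomy (key p (pt p b)) (key p (pt p c)) with hy | hy | hy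
    · exact no_tri p h1 h3 h2 hx hy
    · exact k3 hy
    · rcases lt_trichotomy (key p (pt p a)) (key p (pt p c)) with hz | hz | hz
      · exact no_tri p h2 h3.symm h1 hz hy
      · exact k2 hz
      · exact no_tri p h2.symm h1 h3.symm hz hx
  · exact k1 hx
  · rcases lt_trichotomy (key p (pt p a)) (key p (pt p c)) with hy | hy | hy
    · exact no_tri p h1.symm h2 h3 hx hy
    · exact k2 hy
    · rcases lt_trichotomy (key p (pt p b)) (key p (pt p c)) with hz | hz | hz
      · exact no_tri p h3 h2.symm h1.symm hz hy
      · exact k3 hz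
      · exact no_tri p h3.symm h1.symm h2.symm hz hx

lemma indep_card (S : Finset (V p)) (hS : ∀ x ∈ S, ∀ y ∈ S, ¬ (G p).Adj x y) :
    S.card ≤ 2 * p ^ 2 := by
  classical
  set f : V p → (K p × K p) ⊕ (K p × K p) := fun v =>
    if ∃ w ∈ S, pt p w = pt p v ∧ ln p w ≠ ln p v then Sum.inr (ln p v) else Sum.inl (pt p v)
    with hf
  -- helper: if u v ∈ S share a line, have different point keys, and u's point also
  -- appears with another line in S, contradiction
  have helper : ∀ u ∈ S, ∀ v ∈ S, ln p u = ln p v →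
      key p (pt p u) < key p (pt p v) →
      (∃ w ∈ S, pt p w = pt p u ∧ ln p w ≠ ln p u) → False := by
    intro u hu v hv hl hk ⟨w, hw, hwp, hwl⟩
    apply hS w hw v hv
    left
    refine ⟨?_, ?_, ?_⟩
    · rw [hwp]; exact hk
    · rw [← hl]; exact hwl
    · rw [hwp, ← hl]; exact pt_on p u
  have hinj : Set.InjOn f S := by
    intro u hu v hv hfe
    by_cases h1 : ∃ w ∈ S, pt p w = pt p u ∧ ln p w ≠ ln p u <;>
      by_cases h2 : ∃ w ∈ S, pt p w = pt p v ∧ ln p w ≠ ln p v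
    · -- both inr : lines equal
      rw [hf] at hfe
      simp only [if_pos h1, if_pos h2] at hfe
      have hl : ln p u = ln p v := Sum.inr.inj hfe
      by_cases hp : pt p u = pt p v
      · exact ext_ptln p hp hl
      · exfalso
        have hk : key p (pt p u) ≠ key p (pt p v) := fun h => hp (key_inj p h)
        rcases lt_or_gt_of_ne hk with h | h
        · exact helper u hu v hv hl h h1
        · exact helper v hv u hu hl.symm h h2
    · rw [hf] at hfe; simp only [if_pos h1, if_neg h2] at hfe; simp at hfe
    · rw [hf] at hfe; simp only [if_neg h1, if_pos h2] at hfe; simp at hfe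
    · rw [hf] at hfe
      simp only [if_neg h1, if_neg h2] at hfe
      have hp : pt p u = pt p v := Sum.inl.inj hfe
      by_cases hl : ln p u = ln p v
      · exact ext_ptln p hp hl
      · exact absurd ⟨v, hv, hp.symm, fun h => hl h.symm⟩ h1
  have := Finset.card_le_card_of_injOn f (fun _ _ => Finset.mem_univ _) hinj
  calc S.card ≤ (Finset.univ : Finset ((K p × K p) ⊕ (K p × K p))).card := this
    _ = 2 * p ^ 2 := by
        simp [Fintype.card_sum, ZMod.card]
        ring

end RamseyAux

open RamseyAux in
/-- For every `n ≥ 1` there is a triangle-free graph `G_n` on exactly `n` vertices with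
independence number at most `48·2^(1/3)·n^(2/3)`. -/
theorem exists_triangle_free_graph_small_indepNum (n : ℕ) (hn : 1 ≤ n) :
    ∃ G : SimpleGraph (Fin n), G.CliqueFree 3 ∧
      (indepNum G : ℝ) ≤ 48 * (2 : ℝ) ^ ((1 : ℝ) / 3) * (n : ℝ) ^ ((2 : ℝ) / 3) := by
  classical
  set x : ℝ := (n : ℝ) ^ ((1 : ℝ) / 3) with hx
  have hn1 : (1 : ℝ) ≤ (n : ℝ) := by exact_mod_cast hn
  have hx1 : (1 : ℝ) ≤ x := Real.one_le_rpow hn1 (by norm_num)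
  have hx0 : (0 : ℝ) ≤ x := by linarith
  set m : ℕ := ⌈x⌉₊ with hm
  have hm0 : m ≠ 0 := by
    have : (1 : ℕ) ≤ m := Nat.one_le_ceil_iff.mpr (by linarith)
    omega
  obtain ⟨p, hp, hmp, hp2m⟩ := Nat.exists_prime_lt_and_le_two_mul m hm0
  haveI : Fact p.Prime := ⟨hp⟩
  -- n ≤ p ^ 3
  have hxm : x ≤ (m : ℝ) := Nat.le_ceil x
  have hx3 : x ^ 3 = (n : ℝ) := by
    rw [hx, ← Real.rpow_natCast ((n : ℝ) ^ ((1:ℝ)/3)) 3, ← Real.rpow_mul (by positivity)]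
    norm_num
  have hnm3 : n ≤ m ^ 3 := by
    have : (n : ℝ) ≤ (m : ℝ) ^ 3 := by
      rw [← hx3]; exact pow_le_pow_left₀ hx0 hxm 3
    exact_mod_cast this
  have hnp3 : n ≤ p ^ 3 := le_trans hnm3 (Nat.pow_le_pow_left (le_of_lt hmp) 3)
  -- embedding Fin n ↪ V p
  have hcard : Fintype.card (Fin n) ≤ Fintype.card (V p) := by
    simp [ZMod.card]
    calc n ≤ p ^ 3 := hnp3
      _ = p * (p * p) := by ring
  obtain ⟨e⟩ := Function.Embedding.nonempty_of_card_le hcard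
  refine ⟨(G p).comap e, ?_, ?_⟩
  · -- triangle free
    intro s hs
    apply triangle_free p (s.map e)
    constructor
    · intro a ha b hb hab
      simp only [Finset.coe_map, Set.mem_image, Finset.mem_coe] at ha hb
      obtain ⟨a', ha', rfl⟩ := ha
      obtain ⟨b', hb', rfl⟩ := hb
      have hne : a' ≠ b' := fun h => hab (by rw [h])
      exact hs.isClique ha' hb' hne
    · rw [Finset.card_map]; exact hs.card_eq
  · -- independence number
    have hub : ∀ k ∈ {k | ∃ s : Finset (Fin n), s.card = k ∧
        ∀ a ∈ s, ∀ b ∈ s, ¬ ((G p).comap e).Adj a b}, k ≤ 2 * p ^ 2 := by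
      rintro k ⟨s, rfl, hind⟩
      rw [← Finset.card_map e]
      apply indep_card p
      intro a ha b hb
      simp only [Finset.mem_map] at ha hb
      obtain ⟨a', ha', rfl⟩ := ha
      obtain ⟨b', hb', rfl⟩ := hb
      exact hind a' ha' b' hb'
    have hile : indepNum ((G p).comap e) ≤ 2 * p ^ 2 := csSup_le' hub
    have h1 : (indepNum ((G p).comap e) : ℝ) ≤ 2 * (p : ℝ) ^ 2 := by
      exact_mod_cast hile
    -- p ≤ 2m ≤ 2(x+1) ≤ 4x
    have hmx : (m : ℝ) < x + 1 := Nat.ceil_lt_add_one hx0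
    have hpR : (p : ℝ) ≤ 2 * (m : ℝ) := by exact_mod_cast hp2m
    have hp4x : (p : ℝ) ≤ 4 * x := by nlinarith
    have hp0 : (0 : ℝ) ≤ (p : ℝ) := Nat.cast_nonneg p
    have hsq : (p : ℝ) ^ 2 ≤ 16 * x ^ 2 := by nlinarith
    have hx2 : x ^ 2 = (n : ℝ) ^ ((2 : ℝ) / 3) := by
      rw [hx, ← Real.rpow_natCast ((n : ℝ) ^ ((1:ℝ)/3)) 2, ← Real.rpow_mul (by positivity)]
      norm_num
    have h2 : (1 : ℝ) ≤ (2 : ℝ) ^ ((1 : ℝ) / 3) :=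
      Real.one_le_rpow (by norm_num) (by norm_num)
    have hxn : (0 : ℝ) ≤ (n : ℝ) ^ ((2 : ℝ) / 3) := by positivity
    calc (indepNum ((G p).comap e) : ℝ) ≤ 2 * (p : ℝ) ^ 2 := h1
      _ ≤ 32 * x ^ 2 := by nlinarith
      _ = 32 * (n : ℝ) ^ ((2 : ℝ) / 3) := by rw [hx2]
      _ ≤ 48 * (2 : ℝ) ^ ((1 : ℝ) / 3) * (n : ℝ) ^ ((2 : ℝ) / 3) := by nlinarith
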